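/- Let T¹ = [[0,1,3],[0,2,1]] and T² = [[0,4,2],[0,2,0]] in ℝ^(2×3), and define g¹ = [[2,3],[2,1]] and g² = [[3,1],[3,2]] as functions Fin 2 × Fin 2 → Fin 3 (1-indexed). Then g¹ and g² are both IC on T¹ × T², but there are no S¹, S² ∈ ℝ^(2×3) such that both g¹ and g² are affine maximizers on S¹ × S² and IC(S¹) = IC(T¹). -/

import Mathlib

def IsIC {r m : ℕ} (T : Matrix (Fin r) (Fin m) ℝ) (h : Fin r → Fin m) : Prop :=
  ∃ x : Fin m → ℝ, ∀ i k, T i (h i) - x (h i) ≥ T i k - x k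

noncomputable def T13₁ : Matrix (Fin 2) (Fin 3) ℝ := !![0,1,3; 0,2,1]
noncomputable def T13₂ : Matrix (Fin 2) (Fin 3) ℝ := !![0,4,2; 0,2,0]

def g13₁ : Fin 2 → Fin 2 → Fin 3 := ![![1,2], ![1,0]]
def g13₂ : Fin 2 → Fin 2 → Fin 3 := ![![2,0], ![2,1]]

def IsAM2 (S₁ S₂ : Matrix (Fin 2) (Fin 3) ℝ) (g : Fin 2 → Fin 2 → Fin 3) : Prop :=
  ∃ (α₁ α₂ : ℝ), 0 < α₁ ∧ 0 < α₂ ∧ ∃ (γ z : Fin 3 → ℝ),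
    ∀ (i j : Fin 2) (k : Fin 3),
      α₁ * S₁ i (g i j) + α₂ * S₂ j (g i j) + γ (g i j) - z (g i j) ≥
      α₁ * S₁ i k + α₂ * S₂ j k + γ k - z k

theorem stmt_13 :
    ((∀ j, IsIC T13₁ (fun i => g13₁ i j)) ∧ (∀ i, IsIC T13₂ (fun j => g13₁ i j)) ∧
     (∀ j, IsIC T13₁ (fun i => g13₂ i j)) ∧ (∀ i, IsIC T13₂ (fun j => g13₂ i j))) ∧
    ¬ ∃ (S₁ S₂ : Matrix (Fin 2) (Fin 3) ℝ),
        IsAM2 S₁ S₂ g13₁ ∧ IsAM2 S₁ S₂ g13₂ ∧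
        {h | IsIC S₁ h} = {h | IsIC T13₁ h} := by
  constructor
  · refine ⟨fun j => ?_, fun i => ?_, fun j => ?_, fun i => ?_⟩
    · fin_cases j
      · exact ⟨![0,0,2], by intro i k; fin_cases i <;> fin_cases k <;>
          norm_num [T13₁, g13₁]⟩
      · exact ⟨![0,2,2], by intro i k; fin_cases i <;> fin_cases k <;>
          norm_num [T13₁, g13₁, Matrix.cons_val_two, Matrix.tail_cons, Matrix.head_cons]⟩
    · fin_cases i
      · exact ⟨![0,2,0], by intro j k; fin_cases j <;> fin_cases k <;>
          norm_num [T13₂, g13₁]⟩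
      · exact ⟨![0,2,0], by intro j k; fin_cases j <;> fin_cases k <;>
          norm_num [T13₂, g13₁]⟩
    · fin_cases j
      · exact ⟨![0,2,0], by intro i k; fin_cases i <;> fin_cases k <;>
          norm_num [T13₁, g13₂, Matrix.cons_val_two, Matrix.tail_cons, Matrix.head_cons]⟩
      · exact ⟨![0,1,3], by intro i k; fin_cases i <;> fin_cases k <;>
          norm_num [T13₁, g13₂]⟩
    · fin_cases i
      · exact ⟨![0,2,0], by intro j k; fin_cases j <;> fin_cases k <;>
          norm_num [T13₂, g13₂, Matrix.cons_val_two, Matrix.tail_cons, Matrix.head_cons]⟩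
      · exact ⟨![0,2,0], by intro j k; fin_cases j <;> fin_cases k <;>
          norm_num [T13₂, g13₂, Matrix.cons_val_two, Matrix.tail_cons, Matrix.head_cons]⟩
  · rintro ⟨S₁, S₂, ⟨a, b, ha, hb, γ, z, h1⟩, ⟨c, d, hc, hd, δ, w, h2⟩, hset⟩
    -- the function h = ![1,0] is not IC for T13₁
    have hT : ¬ IsIC T13₁ ![1, 0] := by
      rintro ⟨x, hx⟩
      have e1 := hx 0 0
      have e2 := hx 1 1
      norm_num [T13₁] at e1 e2
      linarith
    have hS : ¬ IsIC S₁ ![1, 0] := by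
      intro hmem
      exact hT ((Set.ext_iff.mp hset ![1, 0]).mp hmem)
    -- hence the strict inequality A
    have hA : S₁ 0 1 + S₁ 1 0 < S₁ 0 0 + S₁ 1 1 := by
      by_contra hcon
      push_neg at hcon
      apply hS
      refine ⟨![S₁ 1 0 - S₁ 1 1, 0, max (S₁ 0 2 - S₁ 0 1) (S₁ 1 2 - S₁ 1 1)], ?_⟩
      intro i k
      have m1 : S₁ 0 2 - S₁ 0 1 ≤ max (S₁ 0 2 - S₁ 0 1) (S₁ 1 2 - S₁ 1 1) := le_max_left _ _
      have m2 : S₁ 1 2 - S₁ 1 1 ≤ max (S₁ 0 2 - S₁ 0 1) (S₁ 1 2 - S₁ 1 1) := le_max_right _ _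
      fin_cases i <;> fin_cases k <;> simp <;> linarith
    -- specialize the affine-maximizer inequalities
    have e1 := h1 0 0 2
    have e2 := h1 0 1 0
    have e3 := h1 1 1 1
    have e4 := h1 1 1 2
    have f1 := h2 0 1 2
    have f2 := h2 1 0 1
    have f3 := h2 1 1 0
    simp only [g13₁, g13₂, Matrix.cons_val_zero, Matrix.cons_val_one,
      Matrix.head_cons] at e1 e2 e3 e4 f1 f2 f3
    have E1 : (0:ℝ) ≤ a * S₁ 0 1 + b * S₂ 0 1 + γ 1 - z 1 -
        (a * S₁ 0 2 + b * S₂ 0 2 + γ 2 - z 2) := by linarith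
    have E2 : (0:ℝ) ≤ a * S₁ 0 2 + b * S₂ 1 2 + γ 2 - z 2 -
        (a * S₁ 0 0 + b * S₂ 1 0 + γ 0 - z 0) := by linarith
    have E3 : (0:ℝ) ≤ a * S₁ 1 0 + b * S₂ 1 0 + γ 0 - z 0 -
        (a * S₁ 1 1 + b * S₂ 1 1 + γ 1 - z 1) := by linarith
    have E4 : (0:ℝ) ≤ a * S₁ 1 0 + b * S₂ 1 0 + γ 0 - z 0 -
        (a * S₁ 1 2 + b * S₂ 1 2 + γ 2 - z 2) := by linarith
    have F1 : (0:ℝ) ≤ c * S₁ 0 0 + d * S₂ 1 0 + δ 0 - w 0 -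
        (c * S₁ 0 2 + d * S₂ 1 2 + δ 2 - w 2) := by linarith
    have F2 : (0:ℝ) ≤ c * S₁ 1 2 + d * S₂ 0 2 + δ 2 - w 2 -
        (c * S₁ 1 1 + d * S₂ 0 1 + δ 1 - w 1) := by linarith
    have F3 : (0:ℝ) ≤ c * S₁ 1 1 + d * S₂ 1 1 + δ 1 - w 1 -
        (c * S₁ 1 0 + d * S₂ 1 0 + δ 0 - w 0) := by linarith
    have had : (0:ℝ) < a * d := mul_pos ha hd
    have hbc : (0:ℝ) < b * c := mul_pos hb hc
    have hab : (0:ℝ) < a * b := mul_pos ha hb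
    have P1 : (0:ℝ) ≤ a * d * (a * S₁ 0 1 + b * S₂ 0 1 + γ 1 - z 1 -
        (a * S₁ 0 2 + b * S₂ 0 2 + γ 2 - z 2)) := mul_nonneg had.le E1
    have P2 : (0:ℝ) ≤ (a * d + b * c) * (a * S₁ 0 2 + b * S₂ 1 2 + γ 2 - z 2 -
        (a * S₁ 0 0 + b * S₂ 1 0 + γ 0 - z 0)) :=
      mul_nonneg (by linarith) E2
    have P3 : (0:ℝ) ≤ a * d * (a * S₁ 1 0 + b * S₂ 1 0 + γ 0 - z 0 -
        (a * S₁ 1 1 + b * S₂ 1 1 + γ 1 - z 1)) := mul_nonneg had.le E3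
    have P4 : (0:ℝ) ≤ b * c * (a * S₁ 1 0 + b * S₂ 1 0 + γ 0 - z 0 -
        (a * S₁ 1 2 + b * S₂ 1 2 + γ 2 - z 2)) := mul_nonneg hbc.le E4
    have Q1 : (0:ℝ) ≤ a * b * (c * S₁ 0 0 + d * S₂ 1 0 + δ 0 - w 0 -
        (c * S₁ 0 2 + d * S₂ 1 2 + δ 2 - w 2)) := mul_nonneg hab.le F1
    have Q2 : (0:ℝ) ≤ a * b * (c * S₁ 1 2 + d * S₂ 0 2 + δ 2 - w 2 -
        (c * S₁ 1 1 + d * S₂ 0 1 + δ 1 - w 1)) := mul_nonneg hab.le F2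
    have Q3 : (0:ℝ) ≤ a * b * (c * S₁ 1 1 + d * S₂ 1 1 + δ 1 - w 1 -
        (c * S₁ 1 0 + d * S₂ 1 0 + δ 0 - w 0)) := mul_nonneg hab.le F3
    have R : (0:ℝ) < a * a * d * (S₁ 0 0 + S₁ 1 1 - (S₁ 0 1 + S₁ 1 0)) :=
      mul_pos (mul_pos (mul_pos ha ha) hd) (by linarith)
    linarith [P1, P2, P3, P4, Q1, Q2, Q3, R]
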